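/- Let n, m be positive integers, let p be a prime, let δ, τ ∈ (0,1), and let A ⊆ F_pⁿ be nonempty with m·|A|·p^{−n} > (3/τ²)·(n·log p − log(δ/2)). For a tuple (x₁, …, x_m) ∈ (F_pⁿ)^m, let S = {x₁, …, x_m}. Then the number of tuples (x₁, …, x_m) ∈ (F_pⁿ)^m for which η_{F_p}(A, S) ≥ τ or the x_i are not pairwise distinct is at most (δ + m²·p^{−n})·p^{nm}. -/

import Mathlib

open MeasureTheory Set Pointwise Filter
open scoped ENNReal

noncomputable section

abbrev Euc (n : ℕ) := EuclideanSpace ℝ (Fin n)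

/-- `N(L, K, x) = |L ∩ (K + x)|`. -/
def Ncount {n : ℕ} (L K : Set (Euc n)) (x : Euc n) : ℕ :=
  (L ∩ (x +ᵥ K)).ncard

/-- Covering smoothness `η(K, L)`, where `dens` is the asymptotic density of `L`
(`dens = 1/covol(L)` for a full-rank lattice `L`). -/
def eta {n : ℕ} (K L : Set (Euc n)) (dens : ℝ) : ℝ≥0∞ :=
  ⨆ x : Euc n, ENNReal.ofReal |(Ncount L K x : ℝ) / ((volume K).toReal * dens) - 1|

/-- The full-rank lattice `g ℤⁿ` (for `g` an invertible matrix). -/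
def latticeOf {n : ℕ} (g : Matrix (Fin n) (Fin n) ℝ) : Set (Euc n) :=
  {x | ∃ m : Fin n → ℤ, ∀ i, x i = g.mulVec (fun j => (m j : ℝ)) i}

/-- Membership in `Conv_n`: bounded convex subset of `ℝⁿ` with nonempty interior. -/
def IsConvBody {n : ℕ} (K : Set (Euc n)) : Prop :=
  Convex ℝ K ∧ Bornology.IsBounded K ∧ (interior K).Nonempty

/-- The translates `ℓ + K`, `ℓ ∈ L`, are pairwise disjoint. -/
def IsPacking {n : ℕ} (L K : Set (Euc n)) : Prop :=
  L.Pairwise fun y z => Disjoint (y +ᵥ K) (z +ᵥ K)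

/-- The translates of `K` by `L` cover `ℝⁿ`. -/
def IsCovering {n : ℕ} (L K : Set (Euc n)) : Prop :=
  L + K = univ

/-- Covering radius of `L` with respect to `K`. -/
def rCov {n : ℕ} (K L : Set (Euc n)) : ℝ :=
  sInf {α : ℝ | 0 < α ∧ IsCovering L (α • K)}

/-- Packing radius of `L` with respect to `K`. -/
def rPack {n : ℕ} (K L : Set (Euc n)) : ℝ :=
  sSup {α : ℝ | 0 < α ∧ IsPacking L (α • K)}

/-- `ρ_K(L)`: ratio of covering and packing radii. -/
def rhoK {n : ℕ} (K L : Set (Euc n)) : ℝ := rCov K L / rPack K L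

/-- The construction A lattice `(1/p)·π_p⁻¹(S)`. -/
def constA {n : ℕ} (p : ℕ) (S : Submodule (ZMod p) (Fin n → ZMod p)) : Set (Euc n) :=
  {x | ∃ m : Fin n → ℤ, (fun i => (m i : ZMod p)) ∈ S ∧ ∀ i, x i = (m i : ℝ) / p}

/-- The lattice `L(S) = (1/p)·g·π_p⁻¹(S)`, for `L = g ℤⁿ`. -/
def latticeOfS {n : ℕ} (g : Matrix (Fin n) (Fin n) ℝ) (p : ℕ)
    (S : Submodule (ZMod p) (Fin n → ZMod p)) : Set (Euc n) :=
  {x | ∃ m : Fin n → ℤ, (fun i => (m i : ZMod p)) ∈ S ∧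
    ∀ i, x i = g.mulVec (fun j => (m j : ℝ)) i / p}

/-- `Φ_{K,L}(ε)` for a lattice of covolume `covol`. -/
def Phi {n : ℕ} (K L : Set (Euc n)) (covol ε : ℝ) : ℝ :=
  sSup {v : ℝ | ∃ α : ℝ, 0 < α ∧ v = (volume (α • K)).toReal / covol ∧
    ENNReal.ofReal ε < eta (α • K) L (1 / covol)}

/-- Discrete smoothness `η_{F_p}(A, S)`. -/
def etaFp {p n : ℕ} (A S : Set (Fin n → ZMod p)) : ℝ :=
  ⨆ x : Fin n → ZMod p,
    |(((x +ᵥ S) ∩ A).ncard : ℝ) / ((S.ncard : ℝ) * (A.ncard : ℝ) / (p : ℝ) ^ n) - 1|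

/-- Number of `r`-dimensional subspaces of `F_pⁿ`. -/
def GrCard (p n r : ℕ) : ℕ :=
  Nat.card {S : Submodule (ZMod p) (Fin n → ZMod p) // Module.finrank (ZMod p) S = r}

set_option maxHeartbeats 1000000

lemma exp_quad {x : ℝ} (h : |x| ≤ 1) : Real.exp x ≤ 1 + x + (3/4) * x^2 := by
  have h2 := Real.exp_bound h (n := 2) (by norm_num)
  have h3 : ∑ i ∈ Finset.range 2, x ^ i / (Nat.factorial i) = 1 + x := by
    simp [Finset.sum_range_succ]
  rw [h3] at h2
  have h4 := (abs_le.mp h2).2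
  have h5 : |x| ^ 2 = x ^ 2 := sq_abs x
  norm_num [Nat.factorial] at h4
  nlinarith [h4, h5]

lemma card_filter_le_sum {T : Type*} [Fintype T] (P : T → Prop) [DecidablePred P]
    (g : T → ℝ) (b : ℝ) (hg : ∀ t, 0 ≤ g t) (h : ∀ t, P t → b ≤ g t) :
    ((Finset.univ.filter P).card : ℝ) * b ≤ ∑ t, g t := by
  calc ((Finset.univ.filter P).card : ℝ) * b = ∑ _t ∈ Finset.univ.filter P, b := by
        rw [Finset.sum_const, nsmul_eq_mul]
    _ ≤ ∑ t ∈ Finset.univ.filter P, g t :=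
        Finset.sum_le_sum fun t ht => h t (Finset.mem_filter.mp ht).2
    _ ≤ ∑ t, g t := Finset.sum_le_sum_of_subset_of_nonneg (Finset.filter_subset _ _)
        (fun t _ _ => hg t)

lemma chernoff_count {V : Type*} [Fintype V] [Nonempty V] (m : ℕ) (P : V → Prop)
    [DecidablePred P] {τ : ℝ} (hτ0 : 0 < τ) (hτ1 : τ < 1) :
    ((Finset.univ.filter fun t : Fin m → V =>
        (1+τ) * ((m : ℝ) * ((Finset.univ.filter P).card : ℝ) / (Fintype.card V : ℝ))
          ≤ ((Finset.univ.filter fun i => P (t i)).card : ℝ)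
        ∨ ((Finset.univ.filter fun i : Fin m => P (t i)).card : ℝ)
          ≤ (1-τ) * ((m : ℝ) * ((Finset.univ.filter P).card : ℝ) / (Fintype.card V : ℝ))).card : ℝ)
      ≤ 2 * (Fintype.card V : ℝ) ^ m *
        Real.exp (-(τ^2 * ((m : ℝ) * ((Finset.univ.filter P).card : ℝ) / (Fintype.card V : ℝ)) / 3)) := by
  classical
  set N : ℝ := (Fintype.card V : ℝ) with hNdef
  have hN0 : (0:ℝ) < N := by
    rw [hNdef]; exact_mod_cast Fintype.card_pos
  set a : ℕ := (Finset.univ.filter P).card with hadef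
  have haN : (a : ℝ) ≤ N := by
    rw [hNdef, hadef]
    exact_mod_cast Finset.card_le_card (Finset.subset_univ _) |>.trans_eq (Finset.card_univ)
  set μ : ℝ := (m : ℝ) * (a : ℝ) / N with hμdef
  have hμ0 : 0 ≤ μ := by rw [hμdef]; positivity
  set lam : ℝ := 2*τ/3 with hlamdef
  have hlam0 : 0 ≤ lam := by rw [hlamdef]; linarith
  have habs : |lam| ≤ 1 := by rw [hlamdef, abs_of_nonneg (by linarith)]; linarith
  have habs' : |(-lam)| ≤ 1 := by rwa [abs_neg]
  set cnt : (Fin m → V) → ℕ := fun t => (Finset.univ.filter fun i => P (t i)).card with hcnt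
  -- MGF bound
  have keyMGF : ∀ s : ℝ, ∑ t : Fin m → V, Real.exp (s * (cnt t : ℝ))
      ≤ N ^ m * Real.exp (μ * (Real.exp s - 1)) := by
    intro s
    have hprod : ∀ t : Fin m → V, Real.exp (s * (cnt t : ℝ))
        = ∏ i, (if P (t i) then Real.exp s else 1) := by
      intro t
      rw [hcnt]
      simp only [Finset.card_filter]
      push_cast
      rw [Finset.mul_sum, Real.exp_sum]
      refine Finset.prod_congr rfl fun i _ => ?_
      by_cases h : P (t i) <;> simp [h]
    calc ∑ t : Fin m → V, Real.exp (s * (cnt t : ℝ))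
        = ∑ t : Fin m → V, ∏ i, (if P (t i) then Real.exp s else 1) := by
          exact Finset.sum_congr rfl fun t _ => hprod t
      _ = (∑ v : V, (if P v then Real.exp s else 1)) ^ m :=
          (Fintype.sum_pow (fun v => if P v then Real.exp s else 1) m).symm
      _ ≤ (N * Real.exp (((a:ℝ)/N) * (Real.exp s - 1))) ^ m := by
          refine pow_le_pow_left₀ ?_ ?_ m
          · refine Finset.sum_nonneg fun v _ => ?_
            by_cases h : P v <;> simp [h, (Real.exp_pos s).le]
          · have hsum : ∑ v : V, (if P v then Real.exp s else 1)
                = (a : ℝ) * Real.exp s + (N - (a:ℝ)) := by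
              rw [Finset.sum_ite, Finset.sum_const, Finset.sum_const]
              have h2 : (Finset.univ.filter fun v => ¬ P v).card = Fintype.card V - a := by
                have h3 := Finset.card_filter_add_card_filter_not
                  (s := (Finset.univ : Finset V)) (p := P)
                rw [Finset.card_univ] at h3
                omega
              have haV : a ≤ Fintype.card V := by
                rw [hadef, ← Finset.card_univ]
                exact Finset.card_le_card (Finset.subset_univ _)
              rw [h2]
              simp only [nsmul_eq_mul, mul_one, ← hadef]
              rw [Nat.cast_sub haV, ← hNdef]
            rw [hsum]
            have h1 : (1:ℝ) + ((a:ℝ)/N)*(Real.exp s - 1)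
                ≤ Real.exp (((a:ℝ)/N)*(Real.exp s - 1)) := by
              linarith [Real.add_one_le_exp (((a:ℝ)/N)*(Real.exp s - 1))]
            have heq : (a:ℝ) * Real.exp s + (N - (a:ℝ))
                = N * (1 + ((a:ℝ)/N)*(Real.exp s - 1)) := by
              field_simp
              ring
            rw [heq]
            exact mul_le_mul_of_nonneg_left h1 hN0.le
      _ = N ^ m * Real.exp (μ * (Real.exp s - 1)) := by
          rw [mul_pow, ← Real.exp_nat_mul]
          congr 1
          rw [hμdef]
          ring
  -- upper tail
  have hupper : ((Finset.univ.filter fun t : Fin m → V => (1+τ)*μ ≤ (cnt t : ℝ)).card : ℝ)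
      ≤ N ^ m * Real.exp (-(τ^2 * μ / 3)) := by
    have hmark := card_filter_le_sum (fun t : Fin m → V => (1+τ)*μ ≤ (cnt t : ℝ))
      (fun t => Real.exp (lam * (cnt t : ℝ))) (Real.exp (lam * ((1+τ)*μ)))
      (fun t => (Real.exp_pos _).le)
      (fun t ht => Real.exp_le_exp.mpr (mul_le_mul_of_nonneg_left ht hlam0))
    have h1 := hmark.trans (keyMGF lam)
    have h2 : ((Finset.univ.filter fun t : Fin m → V => (1+τ)*μ ≤ (cnt t : ℝ)).card : ℝ)
        ≤ N ^ m * Real.exp (μ * (Real.exp lam - 1) - lam * ((1+τ)*μ)) := by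
      have heq : N ^ m * Real.exp (μ * (Real.exp lam - 1)) / Real.exp (lam * ((1+τ)*μ))
          = N ^ m * Real.exp (μ * (Real.exp lam - 1) - lam * ((1+τ)*μ)) := by
        rw [Real.exp_sub]; ring
      exact ((le_div_iff₀ (Real.exp_pos _)).mpr h1).trans_eq heq
    refine h2.trans (mul_le_mul_of_nonneg_left (Real.exp_le_exp.mpr ?_) (by positivity))
    have e1 : Real.exp lam - 1 - lam * (1+τ) ≤ -(τ^2/3) := by
      have hq := exp_quad habs
      rw [hlamdef] at hq ⊢
      nlinarith [hq]
    nlinarith [e1, hμ0, mul_le_mul_of_nonneg_left e1 hμ0]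
  -- lower tail
  have hlower : ((Finset.univ.filter fun t : Fin m → V => (cnt t : ℝ) ≤ (1-τ)*μ).card : ℝ)
      ≤ N ^ m * Real.exp (-(τ^2 * μ / 3)) := by
    have hmark := card_filter_le_sum (fun t : Fin m → V => (cnt t : ℝ) ≤ (1-τ)*μ)
      (fun t => Real.exp (-lam * (cnt t : ℝ))) (Real.exp (-lam * ((1-τ)*μ)))
      (fun t => (Real.exp_pos _).le)
      (fun t ht => Real.exp_le_exp.mpr (by nlinarith [mul_le_mul_of_nonneg_left ht hlam0]))
    have h1 := hmark.trans (keyMGF (-lam))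
    have h2 : ((Finset.univ.filter fun t : Fin m → V => (cnt t : ℝ) ≤ (1-τ)*μ).card : ℝ)
        ≤ N ^ m * Real.exp (μ * (Real.exp (-lam) - 1) - (-lam) * ((1-τ)*μ)) := by
      have heq : N ^ m * Real.exp (μ * (Real.exp (-lam) - 1)) / Real.exp (-lam * ((1-τ)*μ))
          = N ^ m * Real.exp (μ * (Real.exp (-lam) - 1) - (-lam) * ((1-τ)*μ)) := by
        rw [Real.exp_sub]; ring_nf
      exact ((le_div_iff₀ (Real.exp_pos _)).mpr h1).trans_eq heq
    refine h2.trans (mul_le_mul_of_nonneg_left (Real.exp_le_exp.mpr ?_) (by positivity))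
    have e1 : Real.exp (-lam) - 1 + lam * (1-τ) ≤ -(τ^2/3) := by
      have hq := exp_quad habs'
      rw [hlamdef] at hq ⊢
      nlinarith [hq]
    nlinarith [e1, hμ0, mul_le_mul_of_nonneg_left e1 hμ0]
  -- combine
  have hsub : (Finset.univ.filter fun t : Fin m → V =>
        (1+τ)*μ ≤ (cnt t : ℝ) ∨ (cnt t : ℝ) ≤ (1-τ)*μ)
      ⊆ (Finset.univ.filter fun t : Fin m → V => (1+τ)*μ ≤ (cnt t : ℝ))
        ∪ (Finset.univ.filter fun t : Fin m → V => (cnt t : ℝ) ≤ (1-τ)*μ) := by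
    intro t ht
    rcases (Finset.mem_filter.mp ht).2 with h | h
    · exact Finset.mem_union_left _ (Finset.mem_filter.mpr ⟨Finset.mem_univ _, h⟩)
    · exact Finset.mem_union_right _ (Finset.mem_filter.mpr ⟨Finset.mem_univ _, h⟩)
  calc ((Finset.univ.filter fun t : Fin m → V =>
        (1+τ)*μ ≤ (cnt t : ℝ) ∨ (cnt t : ℝ) ≤ (1-τ)*μ).card : ℝ)
      ≤ (((Finset.univ.filter fun t : Fin m → V => (1+τ)*μ ≤ (cnt t : ℝ))
        ∪ (Finset.univ.filter fun t : Fin m → V => (cnt t : ℝ) ≤ (1-τ)*μ)).card : ℝ) := by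
        exact_mod_cast Finset.card_le_card hsub
    _ ≤ (((Finset.univ.filter fun t : Fin m → V => (1+τ)*μ ≤ (cnt t : ℝ)).card : ℝ)
        + ((Finset.univ.filter fun t : Fin m → V => (cnt t : ℝ) ≤ (1-τ)*μ).card : ℝ)) := by
        exact_mod_cast Finset.card_union_le _ _
    _ ≤ 2 * N ^ m * Real.exp (-(τ^2 * μ / 3)) := by linarith [hupper, hlower]


lemma card_filter_coord_eq {α V : Type*} [Fintype α] [Fintype V] [DecidableEq α] [DecidableEq V]
    {i j : α} (hij : i ≠ j) :
    (Finset.univ.filter fun t : α → V => t i = t j).card ≤ Fintype.card V ^ (Fintype.card α - 1) := by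
  rw [← Fintype.card_subtype]
  have hinj : Function.Injective
      (fun (t : {t : α → V // t i = t j}) (k : {k : α // k ≠ j}) => t.1 k.1) := by
    rintro ⟨t, ht⟩ ⟨t', ht'⟩ h
    simp only [funext_iff] at h
    apply Subtype.ext
    funext k
    show t k = t' k
    by_cases hk : k = j
    · subst hk
      have hii := h ⟨i, hij⟩
      simp only at hii
      rw [← ht, ← ht', hii]
    · exact h ⟨k, hk⟩
  calc Fintype.card {t : α → V // t i = t j} ≤ Fintype.card ({k : α // k ≠ j} → V) :=
        Fintype.card_le_of_injective _ hinj
    _ = Fintype.card V ^ (Fintype.card α - 1) := by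
        rw [Fintype.card_fun]
        congr 1
        rw [Fintype.card_subtype_compl, Fintype.card_subtype_eq]

lemma card_filter_vadd_mem {V : Type*} [Fintype V] [AddCommGroup V] [DecidableEq V]
    (A : Set V) [DecidablePred (· ∈ A)] (x : V) :
    (Finset.univ.filter fun v => x + v ∈ A).card = A.ncard := by
  have h1 : (Finset.univ.filter fun v => x + v ∈ A) = A.toFinset.image (fun w => w - x) := by
    ext v
    simp only [Finset.mem_filter, Finset.mem_univ, true_and, Finset.mem_image, Set.mem_toFinset]
    constructor
    · intro h
      exact ⟨x + v, h, by abel⟩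
    · rintro ⟨w, hw, rfl⟩
      simpa [add_sub_cancel] using hw
  rw [h1, Finset.card_image_of_injective _ sub_left_injective, Set.ncard_eq_toFinset_card']


/-- smoothness of a random multiset of points in `F_pⁿ`
(Chernoff-based counting version). -/
theorem statement16 (n m : ℕ) (hn : 0 < n) (hm : 0 < m)
    (p : ℕ) (hp : p.Prime)
    (δ τ : ℝ) (hδ : δ ∈ Set.Ioo (0 : ℝ) 1) (hτ : τ ∈ Set.Ioo (0 : ℝ) 1)
    (A : Set (Fin n → ZMod p)) (hA : A.Nonempty)
    (hbig : (m : ℝ) * (A.ncard : ℝ) / (p : ℝ) ^ n >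
      3 / τ ^ 2 * ((n : ℝ) * Real.log p - Real.log (δ / 2))) :
    (Nat.card {t : Fin m → (Fin n → ZMod p) //
        τ ≤ etaFp A (Set.range t) ∨ ¬ Function.Injective t} : ℝ)
      ≤ (δ + (m : ℝ) ^ 2 / (p : ℝ) ^ n) * (p : ℝ) ^ (n * m) := by
  classical
  haveI : NeZero p := ⟨hp.pos.ne'⟩
  obtain ⟨hτ0, hτ1⟩ := hτ
  obtain ⟨hδ0, hδ1⟩ := hδ
  have hp1 : 1 < (p : ℝ) := by exact_mod_cast hp.one_lt
  have hPN0 : (0:ℝ) < (p:ℝ)^n := by positivity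
  have hcardV : Fintype.card (Fin n → ZMod p) = p ^ n := by
    rw [Fintype.card_fun, ZMod.card, Fintype.card_fin]
  have ha0 : 0 < A.ncard := (Set.ncard_pos A.toFinite).mpr hA
  have haR : (0:ℝ) < (A.ncard : ℝ) := by exact_mod_cast ha0
  have hmR : (0:ℝ) < (m : ℝ) := by exact_mod_cast hm
  set μ : ℝ := (m : ℝ) * (A.ncard : ℝ) / (p : ℝ)^n with hμdef
  have hμ0 : 0 < μ := by rw [hμdef]; exact div_pos (mul_pos hmR haR) hPN0
  -- the exp bound from hbig
  have hE : Real.exp (-(τ^2*μ/3)) < δ/2/((p:ℝ)^n) := by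
    have h1 : (n:ℝ) * Real.log p - Real.log (δ/2) < τ^2*μ/3 := by
      calc (n:ℝ) * Real.log p - Real.log (δ/2)
          = τ^2/3 * (3/τ^2 * ((n:ℝ) * Real.log p - Real.log (δ/2))) := by
            field_simp
        _ < τ^2/3 * μ := by
            exact mul_lt_mul_of_pos_left hbig (by positivity)
        _ = τ^2*μ/3 := by ring
    have h5 : -(τ^2*μ/3) < Real.log (δ/2/((p:ℝ)^n)) := by
      rw [Real.log_div (by positivity) (by positivity), Real.log_pow]
      push_cast
      linarith
    calc Real.exp (-(τ^2*μ/3)) < Real.exp (Real.log (δ/2/((p:ℝ)^n))) :=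
          Real.exp_lt_exp.mpr h5
      _ = δ/2/((p:ℝ)^n) := Real.exp_log (by positivity)
  -- per-x tail count
  have htail : ∀ x : Fin n → ZMod p,
      ((Finset.univ.filter fun t : Fin m → (Fin n → ZMod p) =>
          (1+τ)*μ ≤ ((Finset.univ.filter fun i => x + t i ∈ A).card : ℝ)
          ∨ ((Finset.univ.filter fun i : Fin m => x + t i ∈ A).card : ℝ) ≤ (1-τ)*μ).card : ℝ)
        ≤ 2 * ((p:ℝ)^n)^m * Real.exp (-(τ^2*μ/3)) := by
    intro x
    have h := chernoff_count (V := Fin n → ZMod p) m (fun v => x + v ∈ A) hτ0 hτ1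
    simp only [card_filter_vadd_mem A x, hcardV] at h
    push_cast at h
    exact h
  -- decomposition of the bad set
  have hsub : (Finset.univ.filter fun t : Fin m → (Fin n → ZMod p) =>
        τ ≤ etaFp A (Set.range t) ∨ ¬ Function.Injective t)
      ⊆ (Finset.univ.filter fun t : Fin m → (Fin n → ZMod p) => ¬ Function.Injective t)
        ∪ Finset.univ.biUnion (fun x : Fin n → ZMod p =>
            Finset.univ.filter fun t : Fin m → (Fin n → ZMod p) =>
              (1+τ)*μ ≤ ((Finset.univ.filter fun i => x + t i ∈ A).card : ℝ)
              ∨ ((Finset.univ.filter fun i : Fin m => x + t i ∈ A).card : ℝ) ≤ (1-τ)*μ) := by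
    intro t ht
    by_cases hinj : Function.Injective t
    · have hη : τ ≤ etaFp A (Set.range t) := by
        rcases (Finset.mem_filter.mp ht).2 with h | h
        · exact h
        · exact absurd hinj h
      have hS : (Set.range t).ncard = m := by
        rw [← Set.image_univ, Set.ncard_image_of_injective _ hinj, Set.ncard_univ,
          Nat.card_eq_fintype_card, Fintype.card_fin]
      have hI : ∀ x : Fin n → ZMod p, ((x +ᵥ Set.range t) ∩ A).ncard
          = (Finset.univ.filter fun i => x + t i ∈ A).card := by
        intro x
        have hg : Function.Injective (fun i : Fin m => x + t i) := by
          intro i j hij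
          exact hinj (add_left_cancel hij)
        have h1 : (x +ᵥ Set.range t) = Set.range (fun i => x + t i) := by
          ext y
          simp only [Set.mem_vadd_set, Set.mem_range, vadd_eq_add]
          constructor
          · rintro ⟨b, ⟨i, rfl⟩, rfl⟩; exact ⟨i, rfl⟩
          · rintro ⟨i, rfl⟩; exact ⟨t i, ⟨i, rfl⟩, rfl⟩
        have h2 : Set.range (fun i : Fin m => x + t i) ∩ A
            = (fun i : Fin m => x + t i) '' ((fun i => x + t i) ⁻¹' A) := by
          rw [Set.image_preimage_eq_inter_range, Set.inter_comm]
        have h3 : ((fun i : Fin m => x + t i) ⁻¹' A)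
            = ↑(Finset.univ.filter fun i : Fin m => x + t i ∈ A) := by
          ext i; simp
        rw [h1, h2, Set.ncard_image_of_injective _ hg, h3, Set.ncard_coe_finset]
      obtain ⟨x₀, hx₀⟩ := Finite.exists_max (fun x : Fin n → ZMod p =>
        |((((x +ᵥ Set.range t) ∩ A).ncard : ℝ))
          / (((Set.range t).ncard : ℝ) * (A.ncard : ℝ) / (p:ℝ)^n) - 1|)
      have h2 : τ ≤ |((((x₀ +ᵥ Set.range t) ∩ A).ncard : ℝ))
          / (((Set.range t).ncard : ℝ) * (A.ncard : ℝ) / (p:ℝ)^n) - 1| := by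
        refine le_trans hη (ciSup_le hx₀)
      rw [hI x₀, hS] at h2
      set c : ℝ := ((Finset.univ.filter fun i : Fin m => x₀ + t i ∈ A).card : ℝ) with hcdef
      have h2' : τ ≤ |c / μ - 1| := h2
      have h4 : (c/μ - 1) = (c - μ)/μ := by field_simp
      rw [h4, abs_div, abs_of_pos hμ0] at h2'
      have h3 : τ * μ ≤ |c - μ| := (le_div_iff₀ hμ0).mp h2'
      refine Finset.mem_union_right _ (Finset.mem_biUnion.mpr
        ⟨x₀, Finset.mem_univ _, Finset.mem_filter.mpr ⟨Finset.mem_univ _, ?_⟩⟩)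
      rcases abs_cases (c - μ) with ⟨heq, _⟩ | ⟨heq, _⟩
      · left; rw [heq] at h3; rw [← hcdef]; linarith
      · right; rw [heq] at h3; rw [← hcdef]; linarith
    · refine Finset.mem_union_left _ (Finset.mem_filter.mpr ⟨Finset.mem_univ _, hinj⟩)
  -- non-injective count
  have hNI : (((Finset.univ.filter fun t : Fin m → (Fin n → ZMod p) =>
        ¬ Function.Injective t).card : ℝ)) ≤ (m:ℝ)^2 * ((p:ℝ)^n)^(m-1) := by
    have hsub2 : (Finset.univ.filter fun t : Fin m → (Fin n → ZMod p) =>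
          ¬ Function.Injective t)
        ⊆ (Finset.univ : Finset (Fin m × Fin m)).biUnion (fun ij =>
            Finset.univ.filter fun t : Fin m → (Fin n → ZMod p) =>
              ij.1 ≠ ij.2 ∧ t ij.1 = t ij.2) := by
      intro t ht
      have h1 : ¬ Function.Injective t := (Finset.mem_filter.mp ht).2
      rw [Function.Injective] at h1
      push_neg at h1
      obtain ⟨i, j, hij, hne⟩ := h1
      exact Finset.mem_biUnion.mpr ⟨(i, j), Finset.mem_univ _,
        Finset.mem_filter.mpr ⟨Finset.mem_univ _, hne, hij⟩⟩
    have hcount : ∀ ij : Fin m × Fin m,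
        (Finset.univ.filter fun t : Fin m → (Fin n → ZMod p) =>
          ij.1 ≠ ij.2 ∧ t ij.1 = t ij.2).card ≤ (p^n) ^ (m-1) := by
      intro ij
      by_cases hij : ij.1 = ij.2
      · have : (Finset.univ.filter fun t : Fin m → (Fin n → ZMod p) =>
            ij.1 ≠ ij.2 ∧ t ij.1 = t ij.2) = ∅ := by
          apply Finset.filter_false_of_mem
          intro t _ h
          exact h.1 hij
        simp [this]
      · calc (Finset.univ.filter fun t : Fin m → (Fin n → ZMod p) =>
              ij.1 ≠ ij.2 ∧ t ij.1 = t ij.2).card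
            ≤ (Finset.univ.filter fun t : Fin m → (Fin n → ZMod p) =>
              t ij.1 = t ij.2).card := by
              apply Finset.card_le_card
              intro t ht
              exact Finset.mem_filter.mpr ⟨Finset.mem_univ _,
                ((Finset.mem_filter.mp ht).2).2⟩
          _ ≤ Fintype.card (Fin n → ZMod p) ^ (Fintype.card (Fin m) - 1) :=
              card_filter_coord_eq hij
          _ = (p^n) ^ (m-1) := by rw [hcardV, Fintype.card_fin]
    have hnat : (Finset.univ.filter fun t : Fin m → (Fin n → ZMod p) =>
          ¬ Function.Injective t).card ≤ m * m * (p^n)^(m-1) := by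
      calc (Finset.univ.filter fun t : Fin m → (Fin n → ZMod p) =>
            ¬ Function.Injective t).card
          ≤ ∑ ij : Fin m × Fin m, (Finset.univ.filter
              fun t : Fin m → (Fin n → ZMod p) =>
                ij.1 ≠ ij.2 ∧ t ij.1 = t ij.2).card :=
            (Finset.card_le_card hsub2).trans Finset.card_biUnion_le
        _ ≤ ∑ _ij : Fin m × Fin m, (p^n)^(m-1) :=
            Finset.sum_le_sum fun ij _ => hcount ij
        _ = m * m * (p^n)^(m-1) := by
            rw [Finset.sum_const, Finset.card_univ, Fintype.card_prod, Fintype.card_fin,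
              smul_eq_mul]
    calc (((Finset.univ.filter fun t : Fin m → (Fin n → ZMod p) =>
          ¬ Function.Injective t).card : ℝ))
        ≤ ((m * m * (p^n)^(m-1) : ℕ) : ℝ) := by exact_mod_cast hnat
      _ = (m:ℝ) * m * ((p:ℝ)^n)^(m-1) := by push_cast; ring
      _ ≤ (m:ℝ)^2 * ((p:ℝ)^n)^(m-1) := by
          have : (m:ℝ) * m = (m:ℝ)^2 := by ring
          rw [this]
  -- assemble
  have hid : (Nat.card {t : Fin m → (Fin n → ZMod p) //
      τ ≤ etaFp A (Set.range t) ∨ ¬ Function.Injective t} : ℝ)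
      = (((Finset.univ.filter fun t : Fin m → (Fin n → ZMod p) =>
          τ ≤ etaFp A (Set.range t) ∨ ¬ Function.Injective t).card : ℝ)) := by
    rw [Nat.card_eq_fintype_card, Fintype.card_subtype]
  have hcards : (((Finset.univ.filter fun t : Fin m → (Fin n → ZMod p) =>
        τ ≤ etaFp A (Set.range t) ∨ ¬ Function.Injective t).card : ℝ))
      ≤ (m:ℝ)^2 * ((p:ℝ)^n)^(m-1)
        + (p:ℝ)^n * (2 * ((p:ℝ)^n)^m * Real.exp (-(τ^2*μ/3))) := by
    have h1 := Finset.card_le_card hsub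
    have h2 := h1.trans ((Finset.card_union_le _ _).trans
      (add_le_add_right Finset.card_biUnion_le _))
    have h3 : (((Finset.univ.filter fun t : Fin m → (Fin n → ZMod p) =>
          τ ≤ etaFp A (Set.range t) ∨ ¬ Function.Injective t).card : ℝ))
        ≤ (((Finset.univ.filter fun t : Fin m → (Fin n → ZMod p) =>
            ¬ Function.Injective t).card : ℝ))
          + ∑ x : Fin n → ZMod p, (((Finset.univ.filter
              fun t : Fin m → (Fin n → ZMod p) =>
                (1+τ)*μ ≤ ((Finset.univ.filter fun i => x + t i ∈ A).card : ℝ)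
                ∨ ((Finset.univ.filter fun i : Fin m => x + t i ∈ A).card : ℝ)
                  ≤ (1-τ)*μ).card : ℝ)) := by
      exact_mod_cast h2
    refine h3.trans (add_le_add hNI ?_)
    calc ∑ x : Fin n → ZMod p, (((Finset.univ.filter
            fun t : Fin m → (Fin n → ZMod p) =>
              (1+τ)*μ ≤ ((Finset.univ.filter fun i => x + t i ∈ A).card : ℝ)
              ∨ ((Finset.univ.filter fun i : Fin m => x + t i ∈ A).card : ℝ)
                ≤ (1-τ)*μ).card : ℝ))
        ≤ ∑ _x : Fin n → ZMod p, 2 * ((p:ℝ)^n)^m * Real.exp (-(τ^2*μ/3)) :=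
          Finset.sum_le_sum fun x _ => htail x
      _ = (p:ℝ)^n * (2 * ((p:ℝ)^n)^m * Real.exp (-(τ^2*μ/3))) := by
          rw [Finset.sum_const, Finset.card_univ, hcardV, nsmul_eq_mul]
          push_cast
          ring
  have hfin1 : (m:ℝ)^2 * ((p:ℝ)^n)^(m-1) = (m:ℝ)^2/((p:ℝ)^n) * ((p:ℝ)^n)^m := by
    have h1 : ((p:ℝ)^n)^m = ((p:ℝ)^n)^(m-1) * (p:ℝ)^n := by
      rw [← pow_succ]
      congr 1
      omega
    rw [h1]
    field_simp
  have hfin2 : (p:ℝ)^n * (2 * ((p:ℝ)^n)^m * Real.exp (-(τ^2*μ/3)))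
      ≤ δ * ((p:ℝ)^n)^m := by
    have h6 : 2*(p:ℝ)^n * Real.exp (-(τ^2*μ/3)) ≤ δ := by
      have h7 := (lt_div_iff₀ hPN0).mp hE
      nlinarith
    calc (p:ℝ)^n * (2 * ((p:ℝ)^n)^m * Real.exp (-(τ^2*μ/3)))
        = (2*(p:ℝ)^n * Real.exp (-(τ^2*μ/3))) * ((p:ℝ)^n)^m := by ring
      _ ≤ δ * ((p:ℝ)^n)^m :=
          mul_le_mul_of_nonneg_right h6 (pow_nonneg hPN0.le m)
  rw [hid]
  have hpowmul : ((p:ℝ))^(n*m) = ((p:ℝ)^n)^m := by rw [pow_mul]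
  rw [hpowmul]
  calc (((Finset.univ.filter fun t : Fin m → (Fin n → ZMod p) =>
        τ ≤ etaFp A (Set.range t) ∨ ¬ Function.Injective t).card : ℝ))
      ≤ (m:ℝ)^2 * ((p:ℝ)^n)^(m-1)
        + (p:ℝ)^n * (2 * ((p:ℝ)^n)^m * Real.exp (-(τ^2*μ/3))) := hcards
    _ ≤ (m:ℝ)^2/((p:ℝ)^n) * ((p:ℝ)^n)^m + δ * ((p:ℝ)^n)^m := by
        rw [← hfin1]
        linarith [hfin2]
    _ = (δ + (m:ℝ)^2/((p:ℝ)^n)) * ((p:ℝ)^n)^m := by ring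

end
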